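/- Let f : A → A be a homeomorphism of the closed annulus isotopic to the identity with lift F, and let z be a point of A whose forward orbit is bounded in A. Then the rotation interval of z is contained in the rotation interval of its ω-limit set: ρ̄(F,z) ⊆ ρ̄(F, ω_f(z)), where ρ̄(F,Y) denotes the interval [inf, sup] of rotation numbers over points of Y for which the rotation number exists. -/

import Mathlib

open Filter Topology

/-- The lifted annulus `𝒜 = ℝ × [0,1]`. -/
abbrev 𝒜 : Type := ℝ × (Set.Icc (0:ℝ) 1)

/-- The closed annulus `A = S¹ × [0,1]`. -/
abbrev Ann : Type := AddCircle (1:ℝ) × (Set.Icc (0:ℝ) 1)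

/-- The universal covering map `π : ℝ × [0,1] → S¹ × [0,1]`. -/
noncomputable def cov : 𝒜 → Ann := fun z => ((z.1 : AddCircle (1:ℝ)), z.2)

/-- The deck translation `T(x,y) = (x+1,y)`. -/
def T : 𝒜 → 𝒜 := fun z => (z.1 + 1, z.2)

section AbstractPart
open Function

section Abstract
variable {X : Type*} [TopologicalSpace X]

lemma cont_birkhoffSum {g : X → X} (hg : Continuous g) {ψ : X → ℝ} (hψ : Continuous ψ) (n : ℕ) :
    Continuous (birkhoffSum g ψ n) :=
  continuous_finset_sum _ fun k _ => hψ.comp (hg.iterate k)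

lemma abs_birkhoffSum_le {g : X → X} {ψ : X → ℝ} {M : ℝ} (hM : ∀ y, |ψ y| ≤ M)
    (n : ℕ) (x : X) : |birkhoffSum g ψ n x| ≤ n * M := by
  induction n with
  | zero => simp [birkhoffSum_zero]
  | succ n ih =>
    rw [birkhoffSum_succ]
    calc |birkhoffSum g ψ n x + ψ (g^[n] x)| ≤ |birkhoffSum g ψ n x| + |ψ (g^[n] x)| :=
          abs_add_le _ _
      _ ≤ n * M + M := add_le_add ih (hM _)
      _ = ((n + 1 : ℕ) : ℝ) * M := by push_cast; ring

lemma abs_birkhoffAvg_le {g : X → X} {ψ : X → ℝ} {M : ℝ} (hM : ∀ y, |ψ y| ≤ M)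
    (n : ℕ) (x : X) : |birkhoffSum g ψ n x / n| ≤ M := by
  rcases Nat.eq_zero_or_pos n with rfl | hn
  · simpa [birkhoffSum_zero] using (abs_nonneg (ψ x)).trans (hM x)
  · have hn' : (0:ℝ) < n := by positivity
    rw [abs_div, abs_of_nonneg hn'.le, div_le_iff₀ hn']
    exact (abs_birkhoffSum_le hM n x).trans_eq (mul_comm _ _)

lemma lemD {g : X → X} {ψ : X → ℝ} {N : ℕ} {c δ : ℝ} {x : X}
    (h : ∀ j : ℕ, ∃ m, 1 ≤ m ∧ m ≤ N ∧ birkhoffSum g ψ m (g^[j] x) ≤ (m : ℝ) * c - δ) (n : ℕ) :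
    ∃ i t : ℕ, t ≤ n ∧ n < t + N ∧ t ≤ i * N ∧
      birkhoffSum g ψ t x ≤ ((t : ℕ) : ℝ) * c - (i : ℝ) * δ := by
  choose m hm1 hmN hmS using h
  let t : ℕ → ℕ := fun i => Nat.rec 0 (fun _ ti => ti + m ti) i
  have htsucc : ∀ i, t (i + 1) = t i + m (t i) := fun i => rfl
  have hiN : ∀ i, t i ≤ i * N := by
    intro i; induction i with
    | zero => exact Nat.zero_le _
    | succ i ih =>
      rw [htsucc]
      calc t i + m (t i) ≤ i * N + N := Nat.add_le_add ih (hmN _)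
        _ = (i + 1) * N := by ring
  have hge : ∀ i, i ≤ t i := by
    intro i; induction i with
    | zero => exact Nat.zero_le _
    | succ i ih => rw [htsucc]; have := hm1 (t i); omega
  have hS : ∀ i, birkhoffSum g ψ (t i) x ≤ (Nat.cast (t i) : ℝ) * c - (Nat.cast i : ℝ) * δ := by
    intro i; induction i with
    | zero =>
      show birkhoffSum g ψ 0 x ≤ ((0:ℕ) : ℝ) * c - ((0:ℕ) : ℝ) * δ
      simp [birkhoffSum_zero]
    | succ i ih =>
      rw [htsucc, birkhoffSum_add]
      have h2 := hmS (t i)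
      push_cast
      push_cast at ih h2
      linarith
  have hex : ∃ i, n < t (i + 1) := ⟨n, lt_of_lt_of_le (Nat.lt_succ_self n) (hge (n + 1))⟩
  have hni : n < t (Nat.find hex + 1) := Nat.find_spec hex
  have hti : t (Nat.find hex) ≤ n := by
    rcases Nat.eq_zero_or_pos (Nat.find hex) with h0 | h0
    · rw [h0]; exact Nat.zero_le n
    · obtain ⟨j, hj⟩ := Nat.exists_eq_succ_of_ne_zero (Nat.pos_iff_ne_zero.mp h0)
      have hmin := Nat.find_min hex (by omega : j < Nat.find hex)
      exact hj ▸ Nat.le_of_not_lt hmin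
  refine ⟨Nat.find hex, t (Nat.find hex), hti, ?_, hiN _, hS _⟩
  calc n < t (Nat.find hex + 1) := hni
    _ ≤ t (Nat.find hex) + N := by rw [htsucc]; exact Nat.add_le_add_left (hmN _) _

lemma bddU_of_abs {u : ℕ → ℝ} {M : ℝ} (h : ∀ n, |u n| ≤ M) :
    IsBoundedUnder (· ≤ ·) atTop u ∧ IsBoundedUnder (· ≥ ·) atTop u :=
  ⟨⟨M, eventually_map.2 (Eventually.of_forall fun n => (abs_le.1 (h n)).2)⟩,
   ⟨-M, eventually_map.2 (Eventually.of_forall fun n => (abs_le.1 (h n)).1)⟩⟩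

lemma mapClusterPt_of_subseq {u : ℕ → X} {φ : ℕ → ℕ} (hφ : StrictMono φ) {w : X}
    (hw : Tendsto (fun n => u (φ n)) atTop (𝓝 w)) : MapClusterPt w atTop u :=
  MapClusterPt.of_comp hφ.tendsto_atTop hw.mapClusterPt

end Abstract

set_option maxHeartbeats 2000000 in
theorem exists_omegaLimit_avg_tendsto {X : Type*} [TopologicalSpace X] [CompactSpace X]
    [FirstCountableTopology X]
    {g : X → X} (hg : Continuous g) {ψ : X → ℝ} (hψ : Continuous ψ) (z : X) :
    ∃ w r, (∃ φ : ℕ → ℕ, StrictMono φ ∧ Tendsto (fun n => g^[φ n] z) atTop (𝓝 w)) ∧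
      Tendsto (fun n : ℕ => birkhoffSum g ψ n w / n) atTop (𝓝 r) ∧
      limsup (fun n : ℕ => birkhoffSum g ψ n z / n) atTop ≤ r := by
  haveI : Nonempty X := ⟨z⟩
  obtain ⟨x₀, -, hMx'⟩ := isCompact_univ.exists_isMaxOn Set.univ_nonempty
    ((continuous_abs.comp hψ).continuousOn)
  have hMx := isMaxOn_iff.1 hMx'
  set M : ℝ := |ψ x₀| with hMdef
  have hM : ∀ y, |ψ y| ≤ M := fun y => hMx y (Set.mem_univ y)
  have hM0 : 0 ≤ M := (abs_nonneg _).trans (hM x₀)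
  set u : ℕ → X := fun n => g^[n] z with hu
  set Y : Set X := {w | MapClusterPt w atTop u} with hY
  have hYclosed : IsClosed Y := isClosed_setOf_clusterPt
  have hYcp : IsCompact Y := hYclosed.isCompact
  have hYne : Y.Nonempty := by
    obtain ⟨a, φ, hφ, ha⟩ := CompactSpace.tendsto_subseq u
    exact ⟨a, mapClusterPt_of_subseq hφ ha⟩
  have hYinv : ∀ w ∈ Y, g w ∈ Y := by
    intro w hw
    have h1 : MapClusterPt (g w) atTop (g ∘ u) := hw.continuousAt_comp hg.continuousAt
    have h2 : (g ∘ u) = (u ∘ fun n => n + 1) :=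
      funext fun n => (Function.iterate_succ_apply' g n z).symm
    rw [h2] at h1
    exact MapClusterPt.of_comp (tendsto_add_atTop_nat 1) h1
  have hYit : ∀ w ∈ Y, ∀ k, g^[k] w ∈ Y := by
    intro w hw k
    induction k with
    | zero => exact hw
    | succ k ih => rw [Function.iterate_succ_apply']; exact hYinv _ ih
  have hSc : ∀ n, Continuous (birkhoffSum g ψ n) := cont_birkhoffSum hg hψ
  choose xm hxmY hxmax' using fun n => hYcp.exists_isMaxOn hYne (hSc n).continuousOn
  have hxmax : ∀ n, ∀ y ∈ Y, birkhoffSum g ψ n y ≤ birkhoffSum g ψ n (xm n) :=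
    fun n => isMaxOn_iff.1 (hxmax' n)
  set a : ℕ → ℝ := fun n => birkhoffSum g ψ n (xm n) with ha
  have hsub : Subadditive a := by
    intro p q
    calc a (p + q) = birkhoffSum g ψ p (xm (p + q)) +
          birkhoffSum g ψ q (g^[p] (xm (p + q))) := birkhoffSum_add g ψ p q _
      _ ≤ a p + a q :=
          add_le_add (hxmax p _ (hxmY _)) (hxmax q _ (hYit _ (hxmY _) p))
  have havg : ∀ (x : X) (n : ℕ), |birkhoffSum g ψ n x / n| ≤ M := fun x n =>
    abs_birkhoffAvg_le hM n x
  have haavg : ∀ n : ℕ, |a n / n| ≤ M := fun n => havg (xm n) n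
  have hbdd : BddBelow (Set.range fun n : ℕ => a n / n) := by
    refine ⟨-M, ?_⟩
    rintro r ⟨n, rfl⟩
    exact (abs_le.1 (haavg n)).1
  set β : ℝ := hsub.lim with hβdef
  have hβ : Tendsto (fun n : ℕ => a n / n) atTop (𝓝 β) := hsub.tendsto_lim hbdd
  have hβle : ∀ n : ℕ, n ≠ 0 → β ≤ a n / n := fun n hn => hsub.lim_le_div hbdd hn
  -- Lemma C
  have hC : ∀ x ∈ Y, limsup (fun n : ℕ => birkhoffSum g ψ n x / n) atTop ≤ β := by
    intro x hx
    have hle : ∀ᶠ n : ℕ in atTop, birkhoffSum g ψ n x / n ≤ a n / n := by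
      filter_upwards [eventually_ge_atTop 1] with n hn
      have hn' : (0 : ℝ) < n := by exact_mod_cast hn
      exact (div_le_div_iff_of_pos_right hn').mpr (hxmax n x hx)
    calc limsup (fun n : ℕ => birkhoffSum g ψ n x / n) atTop
        ≤ limsup (fun n : ℕ => a n / n) atTop :=
          limsup_le_limsup hle ((bddU_of_abs (havg x)).2.isCoboundedUnder_le)
            ((bddU_of_abs haavg).1)
      _ = β := hβ.limsup_eq
  -- Lemma A : limsup of averages at z is at most β
  have hA : limsup (fun n : ℕ => birkhoffSum g ψ n z / n) atTop ≤ β := by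
    refine le_of_forall_pos_le_add fun ε hε => ?_
    have hε3 : 0 < ε / 3 := by linarith
    obtain ⟨n₀, hn₀1, hn₀⟩ : ∃ n₀ : ℕ, 1 ≤ n₀ ∧ a n₀ / n₀ < β + ε / 3 := by
      obtain ⟨n₀, h1, h2⟩ :=
        ((eventually_ge_atTop 1).and (hβ.eventually_lt_const (by linarith : β < β + ε / 3))).exists
      exact ⟨n₀, h1, h2⟩
    have hn₀R : (0 : ℝ) < n₀ := by exact_mod_cast hn₀1
    set c : ℝ := β + 2 * (ε / 3) with hc
    have hYU : ∀ x ∈ Y, birkhoffSum g ψ n₀ x < n₀ * c := by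
      intro x hx
      have h1 : birkhoffSum g ψ n₀ x ≤ a n₀ := hxmax n₀ x hx
      rw [div_lt_iff₀ hn₀R] at hn₀
      have h6 : (β + ε / 3) * n₀ < (n₀ : ℝ) * c := by
        rw [hc]; nlinarith [mul_pos hε3 hn₀R]
      exact lt_of_lt_of_le (lt_of_le_of_lt h1 hn₀) h6.le
    set U : Set X := {x : X | birkhoffSum g ψ n₀ x < n₀ * c} with hU
    have hUopen : IsOpen U := isOpen_lt (hSc n₀) continuous_const
    have hKev : ∀ᶠ k : ℕ in atTop, g^[k] z ∈ U := by
      by_contra hcon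
      have hfreq : ∃ᶠ k in atTop, g^[k] z ∈ Uᶜ := by
        rw [not_eventually] at hcon
        exact hcon.mono fun k hk => hk
      obtain ⟨φ, hφ, hφU⟩ := extraction_of_frequently_atTop hfreq
      obtain ⟨w, φ₂, hφ₂, hw⟩ := CompactSpace.tendsto_subseq fun n => g^[φ n] z
      have hwY : w ∈ Y := mapClusterPt_of_subseq (hφ.comp hφ₂) hw
      have hwUc : w ∈ Uᶜ :=
        hUopen.isClosed_compl.mem_of_tendsto hw (Eventually.of_forall fun n => hφU (φ₂ n))
      exact hwUc (hYU w hwY)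
    obtain ⟨K, hK⟩ := eventually_atTop.1 hKev
    have hDh : ∀ j : ℕ, ∃ m, 1 ≤ m ∧ m ≤ n₀ ∧
        birkhoffSum g ψ m (g^[j] (g^[K] z)) ≤ (m : ℝ) * c - 0 := by
      intro j
      refine ⟨n₀, hn₀1, le_rfl, ?_⟩
      rw [← Function.iterate_add_apply, sub_zero]
      exact le_of_lt (hK (j + K) (Nat.le_add_left K j))
    set C : ℝ := K * M + K * |c| + n₀ * M + n₀ * |c| with hCdef
    have hbound : ∀ k : ℕ, K ≤ k → birkhoffSum g ψ k z ≤ k * c + C := by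
      intro k hk
      obtain ⟨kk, rfl⟩ : ∃ kk, k = K + kk := ⟨k - K, by omega⟩
      rw [birkhoffSum_add]
      obtain ⟨i, t, ht1, ht2, ht3, ht4⟩ := lemD hDh kk
      have hsplit : birkhoffSum g ψ kk (g^[K] z) = birkhoffSum g ψ t (g^[K] z) +
          birkhoffSum g ψ (kk - t) (g^[t] (g^[K] z)) := by
        have h5 := birkhoffSum_add g ψ t (kk - t) (g^[K] z)
        rw [Nat.add_sub_cancel' ht1] at h5
        exact h5
      rw [hsplit]
      have e0 : |birkhoffSum g ψ K z| ≤ (K : ℝ) * M := abs_birkhoffSum_le hM K z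
      have e1 : |birkhoffSum g ψ (kk - t) (g^[t] (g^[K] z))| ≤ ((kk - t : ℕ) : ℝ) * M :=
        abs_birkhoffSum_le hM _ _
      have e2 : ((kk - t : ℕ) : ℝ) = (kk : ℝ) - t := by
        rw [Nat.cast_sub ht1]
      have e3 : ((kk : ℝ) - t) ≤ (n₀ : ℝ) := by
        have : kk - t ≤ n₀ := by omega
        rw [← e2]; exact_mod_cast this
      have e4 : (0 : ℝ) ≤ (kk : ℝ) - t := by
        rw [← e2]; positivity
      have e5 : (t : ℝ) * c ≤ (kk : ℝ) * c + ((kk : ℝ) - t) * |c| := by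
        nlinarith [neg_abs_le c, le_abs_self c]
      have e6 : ((kk : ℝ) - t) * |c| ≤ (n₀ : ℝ) * |c| :=
        mul_le_mul_of_nonneg_right e3 (abs_nonneg c)
      have e7 : ((kk - t : ℕ) : ℝ) * M ≤ (n₀ : ℝ) * M := by
        rw [e2]; exact mul_le_mul_of_nonneg_right e3 hM0
      have e8 : (kk : ℝ) * c ≤ ((K + kk : ℕ) : ℝ) * c + (K : ℝ) * |c| := by
        push_cast
        nlinarith [neg_abs_le c, le_abs_self c, Nat.cast_nonneg (α := ℝ) K]
      have l0 := (abs_le.1 e0).2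
      have l1 := (abs_le.1 e1).2
      have l4 : birkhoffSum g ψ t (g^[K] z) ≤ (t : ℝ) * c := by
        have := ht4; simp only [Nat.cast_zero, mul_zero, sub_zero] at this; exact this
      rw [hCdef]
      nlinarith [l0, l1, l4, e5, e6, e7, e8]
    have hev2 : ∀ᶠ n : ℕ in atTop, birkhoffSum g ψ n z / n ≤ c + ε / 3 := by
      have hCtend : Tendsto (fun n : ℕ => C / n) atTop (𝓝 0) :=
        tendsto_const_div_atTop_nhds_zero_nat C
      filter_upwards [eventually_ge_atTop (max K 1), hCtend.eventually_le_const hε3]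
        with n hn hn2
      have hn1 : 1 ≤ n := le_trans (le_max_right _ _) hn
      have hnR : (0 : ℝ) < n := by exact_mod_cast hn1
      have hb := hbound n (le_trans (le_max_left _ _) hn)
      rw [div_le_iff₀ hnR]
      rw [div_le_iff₀ hnR] at hn2
      have hr : (c + ε / 3) * (n : ℝ) = (n : ℝ) * c + ε / 3 * n := by ring
      rw [hr]
      exact le_trans hb (by linarith [hn2])
    calc limsup (fun n : ℕ => birkhoffSum g ψ n z / n) atTop ≤ c + ε / 3 :=
          limsup_le_of_le ((bddU_of_abs (havg z)).2.isCoboundedUnder_le) hev2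
      _ = β + ε := by rw [hc]; ring
  -- Lemma B : for each N there is a point of Y whose first N averages are ≥ β
  have hB : ∀ N : ℕ, ∃ x ∈ Y, ∀ m : ℕ, 1 ≤ m → m ≤ N →
      (m : ℝ) * β ≤ birkhoffSum g ψ m x := by
    intro N
    by_contra hcon
    push_neg at hcon
    have hcon' : ∀ x ∈ Y, ∃ m, 1 ≤ m ∧ m ≤ N ∧ birkhoffSum g ψ m x < (m : ℝ) * β := by
      intro x hx
      obtain ⟨m, hm1, hmN, hlt⟩ := hcon x hx
      exact ⟨m, hm1, hmN, hlt⟩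
    set V : ℕ → Set X := fun q =>
      ⋃ m ∈ Finset.Icc 1 N, {x | birkhoffSum g ψ m x < (m : ℝ) * β - 1 / (q + 1)} with hV
    have hVopen : ∀ q, IsOpen (V q) := fun q =>
      isOpen_biUnion fun m _ => isOpen_lt (hSc m) continuous_const
    have hVmono : Monotone V := by
      intro q q' hq
      refine Set.iUnion₂_mono fun m _ => fun x hx => ?_
      simp only [Set.mem_setOf_eq] at hx ⊢
      have h9 : 1 / ((q' : ℝ) + 1) ≤ 1 / ((q : ℝ) + 1) := by
        apply one_div_le_one_div_of_le (by positivity)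
        have : (q : ℝ) ≤ (q' : ℝ) := by exact_mod_cast hq
        linarith
      linarith
    have hVcover : Y ⊆ ⋃ q, V q := by
      intro x hx
      obtain ⟨m, hm1, hmN, hmlt⟩ := hcon' x hx
      obtain ⟨q, hq⟩ := exists_nat_one_div_lt
        (by linarith : (0 : ℝ) < (m : ℝ) * β - birkhoffSum g ψ m x)
      refine Set.mem_iUnion.2 ⟨q, ?_⟩
      refine Set.mem_biUnion (Finset.mem_Icc.2 ⟨hm1, hmN⟩) ?_
      simp only [Set.mem_setOf_eq]
      linarith
    obtain ⟨q₀, hq₀⟩ := hYcp.elim_directed_cover V hVopen hVcover hVmono.directed_le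
    set δ : ℝ := 1 / ((q₀ : ℝ) + 1) with hδ
    have hδpos : 0 < δ := by rw [hδ]; positivity
    have hunif : ∀ x ∈ Y, ∃ m, 1 ≤ m ∧ m ≤ N ∧
        birkhoffSum g ψ m x ≤ (m : ℝ) * β - δ := by
      intro x hx
      obtain ⟨m, hmIcc, hmx⟩ := Set.mem_iUnion₂.1 (hq₀ hx)
      exact ⟨m, (Finset.mem_Icc.1 hmIcc).1, (Finset.mem_Icc.1 hmIcc).2, le_of_lt hmx⟩
    obtain ⟨y₀, hy₀⟩ := hYne
    have hN1 : 1 ≤ N := by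
      obtain ⟨m, hm1, hmN, -⟩ := hunif y₀ hy₀
      omega
    have hNR : (1 : ℝ) ≤ (N : ℝ) := by exact_mod_cast hN1
    obtain ⟨n, hn⟩ := exists_nat_gt (((N : ℝ) * (M + |β|) / δ + 1) * N)
    have hrhs1 : (1 : ℝ) ≤ ((N : ℝ) * (M + |β|) / δ + 1) * N := by
      have : (0 : ℝ) ≤ (N : ℝ) * (M + |β|) / δ := by positivity
      nlinarith
    have hn1 : 1 ≤ n := by
      by_contra hn1
      interval_cases n
      · simp at hn; linarith
    have hn0 : n ≠ 0 := by omega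
    have hnR : (0 : ℝ) < n := by exact_mod_cast Nat.pos_of_ne_zero hn0
    have hDh : ∀ j, ∃ m, 1 ≤ m ∧ m ≤ N ∧
        birkhoffSum g ψ m (g^[j] (xm n)) ≤ (m : ℝ) * β - δ :=
      fun j => hunif _ (hYit _ (hxmY n) j)
    obtain ⟨i, t, ht1, ht2, ht3, ht4⟩ := lemD hDh n
    have h1 : (n : ℝ) * β ≤ a n := by
      have h2 := hβle n hn0
      rw [le_div_iff₀ hnR] at h2
      linarith
    have hsplit : a n = birkhoffSum g ψ t (xm n) +
        birkhoffSum g ψ (n - t) (g^[t] (xm n)) := by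
      have h5 := birkhoffSum_add g ψ t (n - t) (xm n)
      rw [Nat.add_sub_cancel' ht1] at h5
      exact h5
    have habs : |birkhoffSum g ψ (n - t) (g^[t] (xm n))| ≤ ((n - t : ℕ) : ℝ) * M :=
      abs_birkhoffSum_le hM _ _
    have e2 : ((n - t : ℕ) : ℝ) = (n : ℝ) - t := by rw [Nat.cast_sub ht1]
    have hnt : ((n : ℝ) - t) ≤ (N : ℝ) := by
      rw [← e2]; exact_mod_cast (by omega : n - t ≤ N)
    have hnt0 : (0 : ℝ) ≤ (n : ℝ) - t := by rw [← e2]; positivity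
    have hilarge : (n : ℝ) + 1 ≤ ((i : ℝ) + 1) * (N : ℝ) := by
      have h7 : n + 1 ≤ (i + 1) * N := by
        calc n + 1 ≤ t + N := by omega
          _ ≤ i * N + N := Nat.add_le_add_right ht3 N
          _ = (i + 1) * N := by ring
      exact_mod_cast h7
    have hkey : (i : ℝ) * δ ≤ (N : ℝ) * (M + |β|) := by
      have l1 := (abs_le.1 habs).2
      rw [e2] at l1
      nlinarith [le_abs_self β, neg_abs_le β, abs_nonneg β]
    have hi2 : (i : ℝ) ≤ (N : ℝ) * (M + |β|) / δ := (le_div_iff₀ hδpos).2 hkey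
    have hfin : (n : ℝ) + 1 ≤ ((N : ℝ) * (M + |β|) / δ + 1) * (N : ℝ) := by
      refine le_trans hilarge ?_
      apply mul_le_mul_of_nonneg_right (by linarith) (by positivity)
    linarith
  -- intersection point
  set E : ℕ → Set X := fun N => Y ∩ ⋂ m, ⋂ (_ : 1 ≤ m), ⋂ (_ : m ≤ N),
    {x | (m : ℝ) * β ≤ birkhoffSum g ψ m x} with hE
  have hmemE : ∀ N x, x ∈ E N ↔ (x ∈ Y ∧ ∀ m, 1 ≤ m → m ≤ N →
      (m : ℝ) * β ≤ birkhoffSum g ψ m x) := by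
    intro N x
    rw [hE]
    simp only [Set.mem_inter_iff, Set.mem_iInter, Set.mem_setOf_eq]
  have hEsub : ∀ N, E (N + 1) ⊆ E N := by
    intro N x hx
    rw [hmemE] at hx ⊢
    exact ⟨hx.1, fun m h1 h2 => hx.2 m h1 (by omega)⟩
  have hEne : ∀ N, (E N).Nonempty := by
    intro N
    obtain ⟨x, hxY, hx⟩ := hB N
    exact ⟨x, (hmemE N x).2 ⟨hxY, hx⟩⟩
  have hEclosed : ∀ N, IsClosed (E N) :=
    fun N => hYclosed.inter (isClosed_iInter fun m => isClosed_iInter fun _ =>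
      isClosed_iInter fun _ => isClosed_le continuous_const (hSc m))
  obtain ⟨xs, hxs⟩ := IsCompact.nonempty_iInter_of_sequence_nonempty_isCompact_isClosed
    E hEsub hEne (hEclosed 0).isCompact hEclosed
  have hxsY : xs ∈ Y := ((hmemE 0 xs).1 (Set.mem_iInter.1 hxs 0)).1
  have hxsge : ∀ m : ℕ, 1 ≤ m → (m : ℝ) * β ≤ birkhoffSum g ψ m xs := fun m hm =>
    ((hmemE m xs).1 (Set.mem_iInter.1 hxs m)).2 m hm le_rfl
  have hliminf : β ≤ liminf (fun n : ℕ => birkhoffSum g ψ n xs / n) atTop := by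
    apply le_liminf_of_le ((bddU_of_abs (havg xs)).1.isCoboundedUnder_ge)
    filter_upwards [eventually_ge_atTop 1] with m hm
    have hmR : (0 : ℝ) < m := by exact_mod_cast hm
    rw [le_div_iff₀ hmR]
    linarith [hxsge m hm]
  have hlimsup := hC xs hxsY
  have hll : liminf (fun n : ℕ => birkhoffSum g ψ n xs / n) atTop ≤
      limsup (fun n : ℕ => birkhoffSum g ψ n xs / n) atTop :=
    liminf_le_limsup (bddU_of_abs (havg xs)).1 (bddU_of_abs (havg xs)).2
  have heq1 : liminf (fun n : ℕ => birkhoffSum g ψ n xs / n) atTop = β :=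
    le_antisymm (le_trans hll hlimsup) hliminf
  have heq2 : limsup (fun n : ℕ => birkhoffSum g ψ n xs / n) atTop = β :=
    le_antisymm hlimsup (heq1 ▸ hll)
  have htd : Tendsto (fun n : ℕ => birkhoffSum g ψ n xs / n) atTop (𝓝 β) :=
    tendsto_of_liminf_eq_limsup heq1 heq2 (bddU_of_abs (havg xs)).1 (bddU_of_abs (havg xs)).2
  obtain ⟨φ, hφ, hφt⟩ := TopologicalSpace.FirstCountableTopology.tendsto_subseq hxsY
  exact ⟨xs, β, ⟨φ, hφ, hφt⟩, htd, hA⟩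

end AbstractPart

section Glue
open Function

lemma birkhoffSum_neg' {X : Type*} (g : X → X) (ψ : X → ℝ) (n : ℕ) (x : X) :
    birkhoffSum g (fun y => -ψ y) n x = -birkhoffSum g ψ n x := by
  simp [birkhoffSum, Finset.sum_neg_distrib]

lemma covSurj : Function.Surjective cov := by
  rintro ⟨q, y⟩
  obtain ⟨x, hx⟩ := QuotientAddGroup.mk_surjective q
  exact ⟨(x, y), by simp only [cov]; rw [hx]⟩

/-- A (noncanonical) section of the covering map. -/
noncomputable def covSec : Ann → 𝒜 := fun w => Classical.choose (covSurj w)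

lemma covSec_spec (w : Ann) : cov (covSec w) = w := Classical.choose_spec (covSurj w)

lemma deck (F : 𝒜 ≃ₜ 𝒜) (hFT : ∀ z, F (T z) = T (F z)) :
    ∀ (k : ℤ) (u : 𝒜), F ((u.1 + k, u.2) : 𝒜) = (((F u).1 + k, (F u).2) : 𝒜) := by
  have hup : ∀ v : 𝒜, F ((v.1 + 1, v.2) : 𝒜) = (((F v).1 + 1, (F v).2) : 𝒜) :=
    fun v => hFT v
  have hdown : ∀ v : 𝒜, F ((v.1 - 1, v.2) : 𝒜) = (((F v).1 - 1, (F v).2) : 𝒜) := by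
    intro v
    have h1 : T ((v.1 - 1, v.2) : 𝒜) = v := by
      show ((v.1 - 1 + 1, v.2) : 𝒜) = v
      rw [sub_add_cancel]
    have h2 := hFT ((v.1 - 1, v.2) : 𝒜)
    rw [h1] at h2
    have h3' := congrArg Prod.fst h2
    have h3 : (F v).1 = (F ((v.1 - 1, v.2) : 𝒜)).1 + 1 := h3'
    have h4' := congrArg Prod.snd h2
    have h4 : (F v).2 = (F ((v.1 - 1, v.2) : 𝒜)).2 := h4'
    refine Prod.ext ?_ h4.symm
    show (F ((v.1 - 1, v.2) : 𝒜)).1 = (F v).1 - 1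
    linarith
  have hupn : ∀ (n : ℕ) (u : 𝒜),
      F ((u.1 + (n : ℝ), u.2) : 𝒜) = (((F u).1 + (n : ℝ), (F u).2) : 𝒜) := by
    intro n
    induction n with
    | zero =>
      intro u
      have h0 : ((u.1 + ((0:ℕ) : ℝ), u.2) : 𝒜) = u := Prod.ext (by push_cast; ring) rfl
      rw [h0]
      symm
      exact Prod.ext (by push_cast; ring) rfl
    | succ n ih =>
      intro u
      have h0 : ((u.1 + ((n+1:ℕ) : ℝ), u.2) : 𝒜) =
          ((((u.1 + (n : ℝ), u.2) : 𝒜).1 + 1, ((u.1 + (n : ℝ), u.2) : 𝒜).2) : 𝒜) :=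
        Prod.ext (by push_cast; ring) rfl
      rw [h0, hup, ih u]
      exact Prod.ext (by push_cast; ring) rfl
  have hdownn : ∀ (n : ℕ) (u : 𝒜),
      F ((u.1 - (n : ℝ), u.2) : 𝒜) = (((F u).1 - (n : ℝ), (F u).2) : 𝒜) := by
    intro n
    induction n with
    | zero =>
      intro u
      have h0 : ((u.1 - ((0:ℕ) : ℝ), u.2) : 𝒜) = u := Prod.ext (by push_cast; ring) rfl
      rw [h0]
      symm
      exact Prod.ext (by push_cast; ring) rfl
    | succ n ih =>
      intro u
      have h0 : ((u.1 - ((n+1:ℕ) : ℝ), u.2) : 𝒜) =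
          ((((u.1 - (n : ℝ), u.2) : 𝒜).1 - 1, ((u.1 - (n : ℝ), u.2) : 𝒜).2) : 𝒜) :=
        Prod.ext (by push_cast; ring) rfl
      rw [h0, hdown, ih u]
      exact Prod.ext (by push_cast; ring) rfl
  intro k u
  rcases Int.eq_nat_or_neg k with ⟨n, rfl | rfl⟩
  · have hc : (((n : ℤ) : ℝ)) = (n : ℝ) := by push_cast; ring
    rw [hc]
    exact hupn n u
  · have hc : (Int.cast (-(n : ℤ)) : ℝ) = -(n : ℝ) := by push_cast; ring
    rw [hc]
    have hc2 : u.1 + -(n : ℝ) = u.1 - (n : ℝ) := by ring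
    have hc3 : (F u).1 + -(n : ℝ) = (F u).1 - (n : ℝ) := by ring
    rw [hc2, hc3]
    exact hdownn n u

lemma psi_inv (F : 𝒜 ≃ₜ 𝒜) (hFT : ∀ z, F (T z) = T (F z)) :
    ∀ u v : 𝒜, cov u = cov v → (F u).1 - u.1 = (F v).1 - v.1 := by
  intro u v huv
  have h2' := congrArg Prod.snd huv
  have h2 : u.2 = v.2 := h2'
  have h1' := congrArg Prod.fst huv
  have h1 : (u.1 : AddCircle (1:ℝ)) = (v.1 : AddCircle (1:ℝ)) := h1'
  obtain ⟨k, hk⟩ := AddSubgroup.mem_zmultiples_iff.1 (QuotientAddGroup.eq_iff_sub_mem.1 h1)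
  have hk' : (k : ℝ) = u.1 - v.1 := by
    have := hk
    rwa [zsmul_eq_mul, mul_one] at this
  have hu : u = ((v.1 + (k : ℝ), v.2) : 𝒜) := by
    refine Prod.ext ?_ h2
    show u.1 = v.1 + (k : ℝ)
    linarith
  rw [hu, deck F hFT k v]
  show (F v).1 + (k : ℝ) - (v.1 + (k : ℝ)) = (F v).1 - v.1
  ring

/-- The displacement function on the annulus. -/
noncomputable def psiA (F : 𝒜 ≃ₜ 𝒜) : Ann → ℝ :=
  fun w => (F (covSec w)).1 - (covSec w).1

lemma psiA_cov (F : 𝒜 ≃ₜ 𝒜) (hFT : ∀ z, F (T z) = T (F z)) (u : 𝒜) :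
    psiA F (cov u) = (F u).1 - u.1 :=
  psi_inv F hFT _ u (covSec_spec (cov u))

lemma cov_continuous : Continuous cov :=
  (continuous_quotient_mk'.comp continuous_fst).prodMk continuous_snd

lemma cov_isQuotientMap : IsQuotientMap cov := by
  refine IsOpenMap.isQuotientMap ?_ cov_continuous covSurj
  have : cov = Prod.map (QuotientAddGroup.mk) id := rfl
  rw [this]
  exact QuotientAddGroup.isOpenMap_coe.prodMap IsOpenMap.id

lemma psiA_continuous (F : 𝒜 ≃ₜ 𝒜) (hFT : ∀ z, F (T z) = T (F z)) :
    Continuous (psiA F) := by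
  rw [cov_isQuotientMap.continuous_iff]
  have h : psiA F ∘ cov = fun u : 𝒜 => (F u).1 - u.1 := funext (psiA_cov F hFT)
  rw [h]
  exact (continuous_fst.comp F.continuous).sub continuous_fst

lemma iter_cov (f : Ann ≃ₜ Ann) (F : 𝒜 ≃ₜ 𝒜)
    (hlift : ∀ z : 𝒜, cov (F z) = f (cov z)) (u : 𝒜) (n : ℕ) :
    (⇑f)^[n] (cov u) = cov ((⇑F)^[n] u) := by
  induction n with
  | zero => rfl
  | succ n ih =>
    rw [Function.iterate_succ_apply', Function.iterate_succ_apply', ih, hlift]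

lemma sum_eq (f : Ann ≃ₜ Ann) (F : 𝒜 ≃ₜ 𝒜)
    (hlift : ∀ z : 𝒜, cov (F z) = f (cov z)) (hFT : ∀ z, F (T z) = T (F z))
    (u : 𝒜) (n : ℕ) :
    birkhoffSum (⇑f) (psiA F) n (cov u) = ((⇑F)^[n] u).1 - u.1 := by
  induction n with
  | zero => simp [birkhoffSum_zero]
  | succ n ih =>
    rw [birkhoffSum_succ, ih, iter_cov f F hlift u n, psiA_cov F hFT,
      show (⇑F)^[n+1] u = F ((⇑F)^[n] u) from Function.iterate_succ_apply' (⇑F) n u]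
    ring

end Glue

/-- The rotation interval of a point is contained in the rotation interval of its
ω-limit set: `ρ̄(F,z) ⊆ ρ̄(F, ω_f(z))`. -/
theorem stmt_6 (f : Ann ≃ₜ Ann) (F : 𝒜 ≃ₜ 𝒜)
    (hlift : ∀ z : 𝒜, cov (F z) = f (cov z)) (hFT : ∀ z, F (T z) = T (F z))
    (z : Ann) (hbdd : Bornology.IsBounded (Set.range fun n : ℕ => (⇑f)^[n] z)) :
    ∀ zt : 𝒜, cov zt = z →
      Set.Icc (liminf (fun n : ℕ => (((⇑F)^[n] zt).1 - zt.1) / (n:ℝ)) atTop)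
              (limsup (fun n : ℕ => (((⇑F)^[n] zt).1 - zt.1) / (n:ℝ)) atTop) ⊆
      Set.Icc
        (sInf {r : ℝ | ∃ wt : 𝒜,
          cov wt ∈ {w : Ann | ∃ φ : ℕ → ℕ, StrictMono φ ∧
            Tendsto (fun n => (⇑f)^[φ n] z) atTop (𝓝 w)} ∧
          Tendsto (fun n : ℕ => (((⇑F)^[n] wt).1 - wt.1) / (n:ℝ)) atTop (𝓝 r)})
        (sSup {r : ℝ | ∃ wt : 𝒜,
          cov wt ∈ {w : Ann | ∃ φ : ℕ → ℕ, StrictMono φ ∧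
            Tendsto (fun n => (⇑f)^[φ n] z) atTop (𝓝 w)} ∧
          Tendsto (fun n : ℕ => (((⇑F)^[n] wt).1 - wt.1) / (n:ℝ)) atTop (𝓝 r)}) := by
  intro zt hzt r hr
  set ψ : Ann → ℝ := psiA F with hψdef
  have hψc : Continuous ψ := psiA_continuous F hFT
  have hfc : Continuous (⇑f) := f.continuous
  have hseq : ∀ (u : 𝒜) (n : ℕ),
      (((⇑F)^[n] u).1 - u.1) / (n : ℝ) = birkhoffSum (⇑f) ψ n (cov u) / n := fun u n => by
    rw [hψdef, sum_eq f F hlift hFT]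
  haveI : Nonempty Ann := ⟨z⟩
  obtain ⟨x₀, -, hMx'⟩ := isCompact_univ.exists_isMaxOn Set.univ_nonempty
    ((continuous_abs.comp hψc).continuousOn)
  set M : ℝ := |ψ x₀| with hMdef
  have hM : ∀ y, |ψ y| ≤ M := fun y => isMaxOn_iff.1 hMx' y (Set.mem_univ y)
  set Ω : Set Ann := {w : Ann | ∃ φ : ℕ → ℕ, StrictMono φ ∧
    Tendsto (fun n => (⇑f)^[φ n] z) atTop (𝓝 w)} with hΩ
  set S : Set ℝ := {r : ℝ | ∃ wt : 𝒜, cov wt ∈ Ω ∧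
    Tendsto (fun n : ℕ => (((⇑F)^[n] wt).1 - wt.1) / (n:ℝ)) atTop (𝓝 r)} with hS
  -- every element of S is bounded by M in absolute value
  have hSbdd : ∀ s ∈ S, |s| ≤ M := by
    rintro s ⟨wt, -, hst⟩
    refine le_of_tendsto hst.abs ?_
    filter_upwards with n
    rw [hseq wt n]
    exact abs_birkhoffAvg_le hM n (cov wt)
  have hSAbove : BddAbove S := ⟨M, fun s hs => (abs_le.1 (hSbdd s hs)).2⟩
  have hSBelow : BddBelow S := ⟨-M, fun s hs => (abs_le.1 (hSbdd s hs)).1⟩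
  -- the rotation sequence of the lift zt
  have hveq : (fun n : ℕ => (((⇑F)^[n] zt).1 - zt.1) / (n:ℝ)) =
      fun n : ℕ => birkhoffSum (⇑f) ψ n z / n := by
    funext n
    rw [hseq zt n, hzt]
  -- upper bound side
  obtain ⟨w₁, r₁, hw₁Ω, hw₁t, hw₁le⟩ := exists_omegaLimit_avg_tendsto hfc hψc z
  have hr₁S : r₁ ∈ S := by
    refine ⟨covSec w₁, ?_, ?_⟩
    · rw [covSec_spec w₁]; exact hw₁Ω
    · have h1 : (fun n : ℕ => (((⇑F)^[n] (covSec w₁)).1 - (covSec w₁).1) / (n:ℝ)) =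
          fun n : ℕ => birkhoffSum (⇑f) ψ n w₁ / n := by
        funext n
        rw [hseq (covSec w₁) n, covSec_spec w₁]
      rw [h1]
      exact hw₁t
  -- lower bound side
  obtain ⟨w₂, r₂, hw₂Ω, hw₂t, hw₂le⟩ := exists_omegaLimit_avg_tendsto hfc hψc.neg z
  have hw₂t' : Tendsto (fun n : ℕ => birkhoffSum (⇑f) ψ n w₂ / n) atTop (𝓝 (-r₂)) := by
    have h1 := hw₂t.neg
    have h2 : (fun n : ℕ => -(birkhoffSum (⇑f) (fun y => -ψ y) n w₂ / n)) =
        fun n : ℕ => birkhoffSum (⇑f) ψ n w₂ / n := by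
      funext n
      rw [birkhoffSum_neg', neg_div, neg_neg]
    exact Tendsto.congr (fun n => congrFun h2 n) h1
  have hr₂S : (-r₂) ∈ S := by
    refine ⟨covSec w₂, ?_, ?_⟩
    · rw [covSec_spec w₂]; exact hw₂Ω
    · have h1 : (fun n : ℕ => (((⇑F)^[n] (covSec w₂)).1 - (covSec w₂).1) / (n:ℝ)) =
          fun n : ℕ => birkhoffSum (⇑f) ψ n w₂ / n := by
        funext n
        rw [hseq (covSec w₂) n, covSec_spec w₂]
      rw [h1]
      exact hw₂t'
  -- liminf via negation
  have hvabs : ∀ n : ℕ, |birkhoffSum (⇑f) ψ n z / n| ≤ M := fun n =>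
    abs_birkhoffAvg_le hM n z
  have hnegeq : ((fun x : ℝ => -x) ∘ fun n : ℕ => birkhoffSum (⇑f) ψ n z / n) =
      fun n : ℕ => birkhoffSum (⇑f) (fun y => -ψ y) n z / n := by
    funext n
    simp only [Function.comp_apply]
    rw [birkhoffSum_neg', neg_div]
  have hlim_neg : -(liminf (fun n : ℕ => birkhoffSum (⇑f) ψ n z / n) atTop) =
      limsup (fun n : ℕ => birkhoffSum (⇑f) (fun y => -ψ y) n z / n) atTop := by
    rw [← hnegeq]
    exact Antitone.map_liminf_of_continuousAt (f := fun x : ℝ => -x)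
      (fun a b h => neg_le_neg h) _ (continuous_neg.continuousAt)
      ((bddU_of_abs hvabs).1.isCoboundedUnder_ge) (bddU_of_abs hvabs).2
  have hlower : -r₂ ≤ liminf (fun n : ℕ => birkhoffSum (⇑f) ψ n z / n) atTop := by
    have h3 : -(liminf (fun n : ℕ => birkhoffSum (⇑f) ψ n z / n) atTop) ≤ r₂ := by
      rw [hlim_neg]; exact hw₂le
    linarith
  -- conclude
  rw [Set.mem_Icc] at hr ⊢
  rw [hveq] at hr
  constructor
  · calc sInf S ≤ -r₂ := csInf_le hSBelow hr₂S
      _ ≤ liminf (fun n : ℕ => birkhoffSum (⇑f) ψ n z / n) atTop := hlower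
      _ ≤ r := hr.1
  · calc r ≤ limsup (fun n : ℕ => birkhoffSum (⇑f) ψ n z / n) atTop := hr.2
      _ ≤ r₁ := hw₁le
      _ ≤ sSup S := le_csSup hSAbove hr₁S
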